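/- Let d and n be positive integers, χ a character of the cyclic group C_d of order exactly d, and g = gcd(n, d^∞). Then the induced representation Ind_{C_d}^{C_{dn}} χ (along the inclusion of C_d as the index-n subgroup of C_{dn}) decomposes as a direct sum of one-dimensional characters consisting of exactly g·φ(n₁) distinct characters of order d·g·n₁, for each positive divisor n₁ of n/g, and nothing else. -/

import Mathlib

set_option synthInstance.maxHeartbeats 1000000
set_option maxHeartbeats 1000000

/-- `gcd (n, d^∞) = lim_k gcd (n, d^k)`: the largest divisor of `n` all of whose prime
factors divide `d`. -/
def gcdPow (n d : ℕ) : ℕ :=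
  ∏ q ∈ n.primeFactors.filter (fun q => q ∣ d), q ^ n.factorization q

lemma gcdPow_pos (n d : ℕ) : 0 < gcdPow n d :=
  Finset.prod_pos fun q hq =>
    pow_pos (Nat.pos_of_mem_primeFactors (Finset.mem_filter.mp hq).1) _

lemma gcdPow_mul_compl {n : ℕ} (d : ℕ) (hn : n ≠ 0) :
    gcdPow n d * ∏ q ∈ n.primeFactors.filter (fun q => ¬ q ∣ d), q ^ n.factorization q = n := by
  rw [gcdPow, Finset.prod_filter_mul_prod_filter_not]
  conv_rhs => rw [← Nat.factorization_prod_pow_eq_self hn]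
  rw [Finsupp.prod, Nat.support_factorization]

lemma gcdPow_dvd (n d : ℕ) (hn : n ≠ 0) : gcdPow n d ∣ n :=
  ⟨_, (gcdPow_mul_compl d hn).symm⟩

lemma nat_coprime_of_primes {a b : ℕ} (h : ∀ p, p.Prime → p ∣ a → ¬ p ∣ b) :
    Nat.Coprime a b := by
  by_contra hne
  have h1 : Nat.gcd a b ≠ 1 := hne
  have hp := Nat.minFac_prime h1
  exact h (Nat.gcd a b).minFac hp
    ((Nat.minFac_dvd _).trans (Nat.gcd_dvd_left a b))
    ((Nat.minFac_dvd _).trans (Nat.gcd_dvd_right a b))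

lemma gcdPow_div_coprime {n : ℕ} (d : ℕ) (hn : n ≠ 0) :
    Nat.Coprime (n / gcdPow n d) d := by
  have hkey := gcdPow_mul_compl d hn
  have hdiv : n / gcdPow n d
      = ∏ q ∈ n.primeFactors.filter (fun q => ¬ q ∣ d), q ^ n.factorization q :=
    Nat.div_eq_of_eq_mul_right (gcdPow_pos n d) hkey.symm
  rw [hdiv]
  rw [Nat.coprime_prod_left_iff]
  intro q hq
  rw [Finset.mem_filter] at hq
  exact ((Nat.Prime.coprime_iff_not_dvd (Nat.prime_of_mem_primeFactors hq.1)).mpr hq.2).pow_left _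

/-- every prime factor of `gcdPow n d` divides `d`. -/
lemma gcdPow_primes {n d : ℕ} {p : ℕ} (hp : p.Prime) (hpg : p ∣ gcdPow n d) : p ∣ d := by
  rw [gcdPow, Prime.dvd_finset_prod_iff hp.prime] at hpg
  obtain ⟨q, hq, hpq⟩ := hpg
  rw [Finset.mem_filter] at hq
  have := hp.dvd_of_dvd_pow hpq
  have hq' := Nat.prime_of_mem_primeFactors hq.1
  rw [(Nat.prime_dvd_prime_iff_eq hp hq').mp this]
  exact hq.2

lemma prod_primepow_dvd {s : Finset ℕ} (hs : ∀ q ∈ s, Nat.Prime q) (e : ℕ → ℕ) {t : ℕ}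
    (ht : ∀ q ∈ s, q ^ e q ∣ t) : (∏ q ∈ s, q ^ e q) ∣ t := by
  classical
  induction s using Finset.induction_on with
  | empty => simpa using one_dvd t
  | @insert q s' hq ih =>
    rw [Finset.prod_insert hq]
    have hqp := hs q (Finset.mem_insert_self q s')
    have hcop : Nat.Coprime (q ^ e q) (∏ r ∈ s', r ^ e r) := by
      apply Nat.Coprime.pow_left
      rw [Nat.coprime_prod_right_iff]
      intro r hr
      have hrp := hs r (Finset.mem_insert_of_mem hr)
      exact ((Nat.coprime_primes hqp hrp).mpr (fun h => hq (h ▸ hr))).pow_right _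
    exact hcop.mul_dvd_of_dvd_of_dvd (ht q (Finset.mem_insert_self q s'))
      (ih (fun r hr => hs r (Finset.mem_insert_of_mem hr))
        (fun r hr => ht r (Finset.mem_insert_of_mem hr)))

/-- Minimality: if `t ∣ n` and `d` is coprime to `n / t`, then `gcdPow n d ∣ t`. -/
lemma gcdPow_dvd_of {n d t : ℕ} (hn : n ≠ 0) (htn : t ∣ n) (hcop : Nat.Coprime d (n / t)) :
    gcdPow n d ∣ t := by
  apply prod_primepow_dvd
  · intro q hq
    exact Nat.prime_of_mem_primeFactors (Finset.mem_filter.mp hq).1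
  · intro q hq
    rw [Finset.mem_filter] at hq
    have hqp := Nat.prime_of_mem_primeFactors hq.1
    have ht0 : t ≠ 0 := fun h => hn (Nat.eq_zero_of_zero_dvd (h ▸ htn))
    have hnt0 : n / t ≠ 0 := Nat.div_ne_zero_iff.mpr ⟨ht0, Nat.le_of_dvd (Nat.pos_of_ne_zero hn) htn⟩
    have hnfact : n.factorization q = t.factorization q + (n / t).factorization q := by
      conv_lhs => rw [← Nat.mul_div_cancel' htn]
      rw [Nat.factorization_mul ht0 hnt0]
      rfl
    have : ¬ q ∣ (n / t) :=
      (Nat.Prime.coprime_iff_not_dvd hqp).mp (Nat.Coprime.coprime_dvd_left hq.2 hcop)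
    have hzero : (n / t).factorization q = 0 := Nat.factorization_eq_zero_of_not_dvd this
    rw [hnfact, hzero, add_zero]
    exact Nat.ordProj_dvd t q

example : True := trivial

lemma nt_forward {d n m : ℕ} (hd : 0 < d) (hn : 0 < n) (hm : 0 < m)
    (h2 : m / Nat.gcd m n = d) :
    ∃ n₁ : ℕ, n₁ ∣ n / gcdPow n d ∧ m = d * gcdPow n d * n₁ := by
  set t := Nat.gcd m n with hts
  have htm : t ∣ m := Nat.gcd_dvd_left m n
  have htn : t ∣ n := Nat.gcd_dvd_right m n
  have ht0 : 0 < t := Nat.gcd_pos_of_pos_right m hn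
  have hmdt : m = d * t := by
    rw [← h2, Nat.div_mul_cancel htm]
  have hgcd : Nat.gcd (t * d) (t * (n / t)) = t := by
    rw [mul_comm t d, ← hmdt, Nat.mul_div_cancel' htn]
  rw [Nat.gcd_mul_left] at hgcd
  have hcop : Nat.Coprime d (n / t) := by
    have := Nat.eq_of_mul_eq_mul_left ht0 (hgcd.trans (mul_one t).symm)
    exact this
  have hgt : gcdPow n d ∣ t := gcdPow_dvd_of hn.ne' htn hcop
  refine ⟨t / gcdPow n d, ?_, ?_⟩
  · refine ⟨n / t, ?_⟩
    have h1 : n = gcdPow n d * (t / gcdPow n d) * (n / t) := by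
      rw [Nat.mul_div_cancel' hgt, Nat.mul_div_cancel' htn]
    rw [mul_assoc] at h1
    exact Nat.div_eq_of_eq_mul_right (gcdPow_pos n d) h1
  · rw [mul_assoc, Nat.mul_div_cancel' hgt, ← hmdt]

lemma totient_mul_of_primes_dvd : ∀ (a : ℕ) (b : ℕ), a ≠ 0 →
    (∀ p, p.Prime → p ∣ a → p ∣ b) → (a * b).totient = a * b.totient := by
  intro a
  induction a using Nat.strong_induction_on with
  | _ a ih =>
    intro b ha h
    rcases eq_or_ne a 1 with rfl | ha1
    · simp
    · have hp := Nat.minFac_prime ha1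
      set p := a.minFac with hps
      have hpa : p ∣ a := Nat.minFac_dvd a
      have hpb : p ∣ b := h p hp hpa
      have hap : a = p * (a / p) := (Nat.mul_div_cancel' hpa).symm
      have hdvd : p ∣ (a / p) * b := Dvd.dvd.mul_left hpb _
      have hlt : a / p < a := Nat.div_lt_self (Nat.pos_of_ne_zero ha) hp.one_lt
      have hne : a / p ≠ 0 := by
        intro h0
        rw [h0, mul_zero] at hap
        exact ha hap
      calc (a * b).totient = (p * ((a / p) * b)).totient := by rw [← mul_assoc, ← hap]
    _ = p * ((a / p) * b).totient := Nat.totient_mul_of_prime_of_dvd hp hdvd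
    _ = p * ((a / p) * b.totient) := by
        rw [ih (a / p) hlt b hne (fun q hq hqa => h q hq (hqa.trans (Nat.div_dvd_of_dvd hpa)))]
    _ = a * b.totient := by rw [← mul_assoc, ← hap]

lemma modeq_mod_comm {x y u w : ℕ} (h : x ≡ y [MOD u * w]) : x ≡ y [MOD w * u] := by
  rwa [mul_comm u w] at h

open Complex in
lemma count_fiber {d t k : ℕ} (hd : 0 < d) (ht : 0 < t) (hk : Nat.Coprime k d)
    (ω : ℂˣ) (hω : orderOf ω = d) :
    Nat.card {ζ : ℂˣ // ζ ^ (t * k) = ω ∧ orderOf ζ = d * t} * d.totient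
      = (d * t).totient := by
  have hm : 0 < d * t := Nat.mul_pos hd ht
  haveI : NeZero (d * t) := ⟨hm.ne'⟩
  haveI : NeZero d := ⟨hd.ne'⟩
  have hξc := Complex.isPrimitiveRoot_exp (d * t) hm.ne'
  set ξ : ℂˣ := (hξc.isUnit hm.ne').unit with hξdef
  have hξ : IsPrimitiveRoot ξ (d * t) := hξc.isUnit_unit hm.ne'
  have hordξ : orderOf ξ = d * t := hξ.eq_orderOf.symm
  have hfinξ : IsOfFinOrder ξ := by
    rw [← orderOf_pos_iff, hordξ]; exact hm
  have hgcdt : Nat.gcd (d * t) t = t :=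
    Nat.gcd_eq_right (dvd_mul_left t d)
  have hordη : orderOf (ξ ^ t) = d := by
    rw [hfinξ.orderOf_pow, hordξ, hgcdt, Nat.mul_div_cancel _ ht]
  have hη : IsPrimitiveRoot (ξ ^ t) d := by
    have h0 := IsPrimitiveRoot.orderOf (ξ ^ t)
    rwa [hordη] at h0
  have hωd : ω ^ d = 1 := by rw [← hω]; exact pow_orderOf_eq_one ω
  have hωdC : ((ω : ℂ)) ^ d = 1 := by
    rw [← Units.val_pow_eq_pow_val, hωd, Units.val_one]
  obtain ⟨c, hcd, hc⟩ :=
    (IsPrimitiveRoot.coe_units_iff.mpr hη).eq_pow_of_pow_eq_one hωdC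
  have hcu : (ξ ^ t) ^ c = ω := by
    apply Units.ext
    rw [← hc, Units.val_pow_eq_pow_val]
  have hccop : Nat.Coprime c d := by
    have h1 : orderOf ((ξ ^ t) ^ c) = d := by rw [hcu, hω]
    rw [(hfinξ.pow).orderOf_pow, hordη] at h1
    rcases Nat.div_eq_self.mp h1 with h | h
    · exact absurd h hd.ne'
    · exact Nat.coprime_comm.mp h
  -- transfer to ZMod (d*t)
  have e1 : {a : ZMod (d * t) // (ξ ^ a.val) ^ (t * k) = ω ∧ orderOf (ξ ^ a.val) = d * t}
      ≃ {ζ : ℂˣ // ζ ^ (t * k) = ω ∧ orderOf ζ = d * t} := by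
    refine Equiv.ofBijective (fun a => ⟨ξ ^ a.1.val, a.2⟩) ⟨?_, ?_⟩
    · intro a b hab
      have h1 : ξ ^ a.1.val = ξ ^ b.1.val := congrArg Subtype.val hab
      rw [pow_eq_pow_iff_modEq, hordξ] at h1
      exact Subtype.ext (ZMod.val_injective _ (h1.eq_of_lt_of_lt (ZMod.val_lt _) (ZMod.val_lt _)))
    · rintro ⟨ζ, hζ1, hζ2⟩
      have hζm : ((ζ : ℂ)) ^ (d * t) = 1 := by
        rw [← Units.val_pow_eq_pow_val, ← hζ2, pow_orderOf_eq_one, Units.val_one]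
      obtain ⟨i, hi, hie⟩ := hξc.eq_pow_of_pow_eq_one hζm
      have hieu : ξ ^ i = ζ := by
        apply Units.ext
        rw [Units.val_pow_eq_pow_val, hξdef, IsUnit.unit_spec]
        exact hie
      have hval : ((i : ZMod (d * t))).val = i := ZMod.val_natCast_of_lt hi
      exact ⟨⟨(i : ZMod (d * t)), by rw [hval, hieu]; exact ⟨hζ1, hζ2⟩⟩,
        Subtype.ext (by simp only [hval, hieu])⟩
  have e2 : ∀ a : ZMod (d * t),
      ((ξ ^ a.val) ^ (t * k) = ω ∧ orderOf (ξ ^ a.val) = d * t)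
        ↔ (IsUnit a ∧ a.val * k ≡ c [MOD d]) := by
    intro a
    constructor
    · rintro ⟨h1, h2⟩
      constructor
      · rw [hfinξ.orderOf_pow, hordξ] at h2
        rcases Nat.div_eq_self.mp h2 with h | h
        · exact absurd h hm.ne'
        · have : IsUnit ((a.val : ℕ) : ZMod (d * t)) :=
            (ZMod.isUnit_iff_coprime a.val (d * t)).mpr (Nat.coprime_comm.mp h)
          rwa [ZMod.natCast_val, ZMod.cast_id] at this
      · rw [← pow_mul, ← hcu, ← pow_mul, pow_eq_pow_iff_modEq, hordξ] at h1
        have h1' : t * (a.val * k) ≡ t * c [MOD t * d] := by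
          calc t * (a.val * k) = a.val * (t * k) := by ring
          _ ≡ t * c [MOD t * d] := modeq_mod_comm h1
        exact Nat.ModEq.mul_left_cancel' ht.ne' h1'
    · rintro ⟨h1, h2⟩
      have hcop : Nat.Coprime a.val (d * t) := by
        have := (ZMod.isUnit_iff_coprime a.val (d * t)).mp
          (by rwa [ZMod.natCast_val, ZMod.cast_id])
        exact this
      constructor
      · have h3 : a.val * (t * k) ≡ t * c [MOD t * d] := by
          calc a.val * (t * k) = t * (a.val * k) := by ring
          _ ≡ t * c [MOD t * d] := Nat.ModEq.mul_left' t h2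
        rw [← pow_mul, ← hcu, ← pow_mul, pow_eq_pow_iff_modEq, hordξ]
        exact modeq_mod_comm h3
      · rw [hfinξ.orderOf_pow, hordξ]
        rw [Nat.Coprime, Nat.gcd_comm] at hcop
        rw [hcop, Nat.div_one]
  have hdm : d ∣ d * t := dvd_mul_right d t
  set f := ZMod.unitsMap hdm with hfdef
  set γ : (ZMod d)ˣ := ZMod.unitOfCoprime c hccop * (ZMod.unitOfCoprime k hk)⁻¹ with hγdef
  have e3 : {a : ZMod (d * t) // IsUnit a ∧ a.val * k ≡ c [MOD d]}
      ≃ {u : (ZMod (d * t))ˣ // ((u : ZMod (d * t))).val * k ≡ c [MOD d]} :=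
    { toFun := fun a => ⟨a.2.1.unit, by rw [IsUnit.unit_spec]; exact a.2.2⟩
      invFun := fun u => ⟨(u.1 : ZMod (d * t)), u.1.isUnit, u.2⟩
      left_inv := fun a => Subtype.ext a.2.1.unit_spec
      right_inv := fun u => Subtype.ext (Units.ext (IsUnit.unit_spec _)) }
  have hcond : ∀ u : (ZMod (d * t))ˣ,
      (((u : ZMod (d * t))).val * k ≡ c [MOD d]) ↔ f u = γ := by
    intro u
    have hval : (((u : ZMod (d * t)).val : ℕ) : ZMod d) = ((f u : (ZMod d)ˣ) : ZMod d) := by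
      rw [hfdef, ZMod.unitsMap_def, Units.coe_map, MonoidHom.coe_coe, ZMod.castHom_apply,
        ZMod.natCast_val]
    rw [← ZMod.natCast_eq_natCast_iff, Nat.cast_mul, hval]
    constructor
    · intro h
      have h2 : f u * ZMod.unitOfCoprime k hk = ZMod.unitOfCoprime c hccop :=
        Units.ext (by rw [Units.val_mul, ZMod.coe_unitOfCoprime]; exact h)
      rw [hγdef, ← h2, mul_inv_cancel_right]
    · intro h
      rw [h, hγdef, ← ZMod.coe_unitOfCoprime k hk, ← Units.val_mul, inv_mul_cancel_right,
        ZMod.coe_unitOfCoprime]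
  have e4 := Equiv.subtypeEquivRight hcond
  -- fiber of a surjective homomorphism has the cardinality of the kernel
  have hsurj := ZMod.unitsMap_surjective hdm
  obtain ⟨u₀, hu₀⟩ := hsurj γ
  have e5 : {u : (ZMod (d * t))ˣ // f u = γ} ≃ (MonoidHom.ker f) :=
    { toFun := fun u => ⟨u₀⁻¹ * u.1, by
        rw [MonoidHom.mem_ker, map_mul, map_inv, hu₀, u.2, inv_mul_cancel]⟩
      invFun := fun v => ⟨u₀ * v.1, by
        rw [map_mul, hu₀, MonoidHom.mem_ker.mp v.2, mul_one]⟩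
      left_inv := fun u => Subtype.ext (by simp)
      right_inv := fun v => Subtype.ext (by simp) }
  have hchain : Nat.card {ζ : ℂˣ // ζ ^ (t * k) = ω ∧ orderOf ζ = d * t}
      = Nat.card (MonoidHom.ker f) :=
    Nat.card_congr ((((e1.symm.trans (Equiv.subtypeEquivRight e2)).trans e3).trans e4).trans e5)
  have hcard1 : Nat.card (ZMod (d * t))ˣ
      = Nat.card ((ZMod (d * t))ˣ ⧸ MonoidHom.ker f) * Nat.card (MonoidHom.ker f) :=
    Subgroup.card_eq_card_quotient_mul_card_subgroup _
  have hquot : Nat.card ((ZMod (d * t))ˣ ⧸ MonoidHom.ker f) = Nat.card (ZMod d)ˣ :=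
    Nat.card_congr (QuotientGroup.quotientKerEquivOfSurjective f hsurj).toEquiv
  have hm' : Nat.card (ZMod (d * t))ˣ = (d * t).totient := by
    rw [Nat.card_eq_fintype_card, ZMod.card_units_eq_totient]
  have hd' : Nat.card (ZMod d)ˣ = d.totient := by
    rw [Nat.card_eq_fintype_card, ZMod.card_units_eq_totient]
  rw [hchain, mul_comm]
  rw [hm', hquot, hd'] at hcard1
  exact hcard1.symm

section GroupAux

variable {M : Type} [Group M]

/-- Evaluation at a point, as a monoid hom on the character group. -/
def evalHom (x : M) : (M →* ℂˣ) →* ℂˣ where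
  toFun f := f x
  map_one' := rfl
  map_mul' _ _ := rfl

lemma evalHom_injective (x : M) (hx : ∀ y : M, ∃ j : ℤ, x ^ j = y) :
    Function.Injective (evalHom x) := by
  intro f g h
  have h' : f x = g x := h
  apply MonoidHom.ext
  intro y
  obtain ⟨j, rfl⟩ := hx y
  rw [map_zpow, map_zpow, h']

lemma mkHom_key (x : M) (hx : ∀ y : M, ∃ j : ℤ, x ^ j = y)
    (ζ : ℂˣ) (hζ : ζ ^ (orderOf x : ℤ) = 1) (y : M) (j : ℤ) (hj : x ^ j = y) :
    ζ ^ j = ζ ^ (hx y).choose := by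
  have hch : x ^ (hx y).choose = y := (hx y).choose_spec
  have hxx : x ^ (j - (hx y).choose) = 1 := by
    rw [zpow_sub, hj, hch]
    simp
  obtain ⟨s, hs⟩ := orderOf_dvd_iff_zpow_eq_one.mpr hxx
  have h1 : ζ ^ (j - (hx y).choose) = 1 := by rw [hs, zpow_mul, hζ, one_zpow]
  rw [zpow_sub] at h1
  exact (div_eq_one.mp h1)

/-- Build a character of a cyclic group from a root of unity. -/
noncomputable def mkHom (x : M) (hx : ∀ y : M, ∃ j : ℤ, x ^ j = y)
    (ζ : ℂˣ) (hζ : ζ ^ (orderOf x : ℤ) = 1) : M →* ℂˣ where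
  toFun y := ζ ^ (hx y).choose
  map_one' := by
    show ζ ^ (hx 1).choose = 1
    rw [← mkHom_key x hx ζ hζ 1 0 (zpow_zero x), zpow_zero]
  map_mul' y z := by
    show ζ ^ (hx (y * z)).choose = ζ ^ (hx y).choose * ζ ^ (hx z).choose
    rw [← mkHom_key x hx ζ hζ (y * z) ((hx y).choose + (hx z).choose)
      (by rw [zpow_add, (hx y).choose_spec, (hx z).choose_spec]), zpow_add]

lemma mkHom_apply (x : M) (hx : ∀ y : M, ∃ j : ℤ, x ^ j = y)
    (ζ : ℂˣ) (hζ : ζ ^ (orderOf x : ℤ) = 1) : mkHom x hx ζ hζ x = ζ := by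
  have := (mkHom_key x hx ζ hζ x 1 (zpow_one x)).symm
  rw [zpow_one] at this
  exact this

end GroupAux

/-- Let `d, n` be positive integers, `χ` a character of the cyclic group
`C_d` of order exactly `d`, and `g = gcd (n, d^∞)`.  Then the induced representation
`Ind_{C_d}^{C_{dn}} χ` consists of exactly `g · φ n₁` distinct characters of order
`d · g · n₁` for each positive divisor `n₁` of `n / g`, and nothing else.  (Here `C_{dn}`
is modelled by a cyclic group `G` of order `d * n`, `C_d` by its subgroup `H` of order
`d`, and — by Frobenius reciprocity for abelian groups — the constituents of `Ind χ` are
exactly the characters `ψ` of `G` with `ψ∣_H = χ`, each occurring once.) -/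
theorem statement12 (G : Type) [Group G] [IsCyclic G] [Finite G]
    (d n : ℕ) (hd : 0 < d) (hn : 0 < n) (hG : Nat.card G = d * n)
    (H : Subgroup G) (hH : Nat.card ↥H = d)
    (χ : ↥H →* ℂˣ) (hχ : orderOf χ = d) :
    (∀ ψ : G →* ℂˣ, ψ.comp H.subtype = χ →
        ∃ n₁ : ℕ, n₁ ∣ n / gcdPow n d ∧ orderOf ψ = d * gcdPow n d * n₁) ∧
      ∀ n₁ : ℕ, n₁ ∣ n / gcdPow n d →
        Nat.card {ψ : G →* ℂˣ // ψ.comp H.subtype = χ ∧ orderOf ψ = d * gcdPow n d * n₁} =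
          gcdPow n d * Nat.totient n₁ := by
  classical
  obtain ⟨x, hx⟩ := IsCyclic.exists_generator (α := G)
  have hxz : ∀ y : G, ∃ j : ℤ, x ^ j = y := fun y => Subgroup.mem_zpowers_iff.mp (hx y)
  have htop : Subgroup.zpowers x = ⊤ := by
    rw [Subgroup.eq_top_iff']
    exact hx
  have hordx : orderOf x = d * n := by
    rw [← Nat.card_zpowers, htop, Subgroup.card_top, hG]
  have hN : 0 < d * n := Nat.mul_pos hd hn
  have hordxn : orderOf (x ^ n) = d := by
    rw [orderOf_pow, hordx, Nat.gcd_eq_right (dvd_mul_left n d), Nat.mul_div_cancel _ hn]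
  -- identify H with the subgroup generated by x ^ n
  have hle : H ≤ Subgroup.zpowers (x ^ n) := by
    intro y hy
    obtain ⟨j, hj⟩ := hxz y
    have hyd : y ^ d = 1 := by
      have h1 : (⟨y, hy⟩ : H) ^ d = 1 := by rw [← hH]; exact pow_card_eq_one'
      have h2 := congrArg (Subgroup.subtype H) h1
      simpa using h2
    have hzp : x ^ (j * (d : ℤ)) = 1 := by rw [zpow_mul, hj, zpow_natCast, hyd]
    have hdvd : ((d * n : ℕ) : ℤ) ∣ j * d := by
      rw [← hordx]
      exact orderOf_dvd_iff_zpow_eq_one.mpr hzp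
    have hdvd2 : (n : ℤ) ∣ j := by
      obtain ⟨s, hs⟩ := hdvd
      refine ⟨s, ?_⟩
      have hd0 : (d : ℤ) ≠ 0 := Int.natCast_ne_zero.mpr hd.ne'
      apply mul_right_cancel₀ hd0
      push_cast at hs ⊢
      linarith [hs]
    obtain ⟨s, hs⟩ := hdvd2
    refine Subgroup.mem_zpowers_iff.mpr ⟨s, ?_⟩
    rw [← hj, hs, ← zpow_natCast x n, ← zpow_mul]
  have hcards : Nat.card ↥(Subgroup.zpowers (x ^ n)) ≤ Nat.card ↥H := by
    rw [hH, Nat.card_zpowers, hordxn]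
  have hHz : H = Subgroup.zpowers (x ^ n) := Subgroup.eq_of_le_of_card_ge hle hcards
  subst hHz
  set gz : ↥(Subgroup.zpowers (x ^ n)) := ⟨x ^ n, Subgroup.mem_zpowers _⟩ with hgz
  have hgzgen : ∀ h : ↥(Subgroup.zpowers (x ^ n)), ∃ j : ℤ, gz ^ j = h := by
    intro h
    obtain ⟨j, hj⟩ := Subgroup.mem_zpowers_iff.mp h.2
    refine ⟨j, ?_⟩
    apply Subtype.ext
    rw [SubgroupClass.coe_zpow]
    exact hj
  set ω : ℂˣ := χ gz with hωdef
  have hordω : orderOf ω = d := by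
    rw [← hχ]
    exact orderOf_injective (evalHom gz) (evalHom_injective gz hgzgen) χ
  -- restriction condition in terms of the value at x
  have hrest : ∀ ψ : G →* ℂˣ,
      ψ.comp (Subgroup.zpowers (x ^ n)).subtype = χ ↔ (ψ x) ^ n = ω := by
    intro ψ
    constructor
    · intro h
      have h1 := congrArg (fun f => f gz) h
      exact (map_pow ψ x n).symm.trans h1
    · intro h
      ext hh
      obtain ⟨j, rfl⟩ := hgzgen hh
      have h1 : ψ.comp (Subgroup.zpowers (x ^ n)).subtype gz = χ gz := by
        show ψ (x ^ n) = ω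
        rw [map_pow]
        exact h
      rw [map_zpow, map_zpow, h1]
  have hordψ : ∀ ψ : G →* ℂˣ, orderOf ψ = orderOf (ψ x) := fun ψ =>
    (orderOf_injective (evalHom x) (evalHom_injective x hxz) ψ).symm
  have hg0 := gcdPow_pos n d
  have hgdvd := gcdPow_dvd n d hn.ne'
  have hcopnd := gcdPow_div_coprime d hn.ne'
  constructor
  · intro ψ hψ
    have hζω : (ψ x) ^ n = ω := (hrest ψ).mp hψ
    have hfin : IsOfFinOrder (ψ x) := by
      refine isOfFinOrder_iff_pow_eq_one.mpr ⟨d * n, hN, ?_⟩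
      rw [mul_comm d n, pow_mul, hζω, ← hordω, pow_orderOf_eq_one]
    have hordpow : orderOf ((ψ x) ^ n) = orderOf (ψ x) / Nat.gcd (orderOf (ψ x)) n :=
      IsOfFinOrder.orderOf_pow (ψ x) n hfin
    rw [hζω, hordω] at hordpow
    obtain ⟨n₁, hn₁, hmeq⟩ := nt_forward hd hn hfin.orderOf_pos hordpow.symm
    exact ⟨n₁, hn₁, by rw [hordψ ψ]; exact hmeq⟩
  · intro n₁ hn₁
    have hng0 : 0 < n / gcdPow n d := Nat.div_pos (Nat.le_of_dvd hn hgdvd) hg0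
    have hn₁0 : 0 < n₁ := by
      rcases Nat.eq_zero_or_pos n₁ with rfl | h
      · rw [zero_dvd_iff] at hn₁
        omega
      · exact h
    have hts : 0 < gcdPow n d * n₁ := Nat.mul_pos hg0 hn₁0
    have htdvd : gcdPow n d * n₁ ∣ n := by
      obtain ⟨s, hs⟩ := hn₁
      refine ⟨s, ?_⟩
      rw [mul_assoc, ← hs, Nat.mul_div_cancel' hgdvd]
    set k := n / (gcdPow n d * n₁) with hkdef
    have hnk : n = (gcdPow n d * n₁) * k := (Nat.mul_div_cancel' htdvd).symm
    have hkdvd : k ∣ n / gcdPow n d := by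
      refine ⟨n₁, ?_⟩
      have h1 : n = gcdPow n d * (k * n₁) := by
        conv_lhs => rw [hnk]
        ring
      exact Nat.div_eq_of_eq_mul_right hg0 h1
    have hkcop : Nat.Coprime k d := Nat.Coprime.coprime_dvd_left hkdvd hcopnd
    have key := count_fiber hd hts hkcop ω hordω
    have ecard : Nat.card {ψ : G →* ℂˣ //
        ψ.comp (Subgroup.zpowers (x ^ n)).subtype = χ ∧ orderOf ψ = d * gcdPow n d * n₁}
        = Nat.card {ζ : ℂˣ //
            ζ ^ (gcdPow n d * n₁ * k) = ω ∧ orderOf ζ = d * (gcdPow n d * n₁)} := by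
      apply Nat.card_congr
      refine Equiv.ofBijective (fun p => ⟨p.1 x, ?_, ?_⟩) ⟨?_, ?_⟩
      · rw [← hnk]
        exact (hrest p.1).mp p.2.1
      · rw [← hordψ p.1, p.2.2, mul_assoc]
      · intro p q hpq
        have h1 : p.1 x = q.1 x := congrArg Subtype.val hpq
        exact Subtype.ext (evalHom_injective x hxz h1)
      · rintro ⟨ζ, hζ1, hζ2⟩
        have hζN : ζ ^ (d * n) = 1 := by
          have h1 : ζ ^ (d * (gcdPow n d * n₁)) = 1 := by
            rw [← hζ2]; exact pow_orderOf_eq_one ζ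
          have h2 : d * n = (d * (gcdPow n d * n₁)) * k := by
            conv_lhs => rw [hnk]
            ring
          rw [h2, pow_mul, h1, one_pow]
        have hζord : ζ ^ (orderOf x : ℤ) = 1 := by
          rw [hordx, zpow_natCast, hζN]
        set ψ := mkHom x hxz ζ hζord with hψdef
        have hψx : ψ x = ζ := mkHom_apply x hxz ζ hζord
        have hcond : ψ.comp (Subgroup.zpowers (x ^ n)).subtype = χ := by
          refine (hrest ψ).mpr ?_
          rw [hψx, hnk]
          exact hζ1
        refine ⟨⟨ψ, hcond, ?_⟩, Subtype.ext hψx⟩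
        rw [hordψ ψ, hψx, hζ2, mul_assoc]
    rw [ecard]
    have hcop_n₁d : Nat.Coprime n₁ d := Nat.Coprime.coprime_dvd_left hn₁ hcopnd
    have hcop_gn₁ : Nat.Coprime (gcdPow n d) n₁ := by
      apply nat_coprime_of_primes
      intro p hp hpg hpn₁
      have hpd := gcdPow_primes hp hpg
      have h1 : Nat.Coprime n₁ p := Nat.Coprime.coprime_dvd_right hpd hcop_n₁d
      exact hp.ne_one (Nat.Coprime.eq_one_of_dvd h1.symm hpn₁)
    have hcop2 : Nat.Coprime (gcdPow n d * d) n₁ := Nat.Coprime.mul hcop_gn₁ hcop_n₁d.symm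
    have hφ : (d * (gcdPow n d * n₁)).totient = gcdPow n d * n₁.totient * d.totient := by
      calc (d * (gcdPow n d * n₁)).totient = ((gcdPow n d * d) * n₁).totient := by
            rw [show d * (gcdPow n d * n₁) = (gcdPow n d * d) * n₁ by ring]
        _ = (gcdPow n d * d).totient * n₁.totient := Nat.totient_mul hcop2
        _ = (gcdPow n d * d.totient) * n₁.totient := by
            rw [totient_mul_of_primes_dvd (gcdPow n d) d hg0.ne'
              (fun p hp hpg => gcdPow_primes hp hpg)]
        _ = gcdPow n d * n₁.totient * d.totient := by ring
    have hdφ : 0 < d.totient := Nat.totient_pos.mpr hd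
    apply Nat.eq_of_mul_eq_mul_right hdφ
    rw [key, hφ]
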